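/- Let ω₋ and ω₊ be positively oriented simple closed contours in an open set Λ ⊂ ℂ, both enclosing a compact set K, with ω₋ strictly inside ω₊, and let b : Λ → ℂ be holomorphic and injective, and g : Λ∖K → ℂ holomorphic. Then for every z in the open annulus between ω₋ and ω₊, g(z) = (1/2πi) ∮_{ω₊} g(w) b'(w)/(b(w) − b(z)) dw − (1/2πi) ∮_{ω₋} g(w) b'(w)/(b(w) − b(z)) dw. -/

import Mathlib

open Complex Metric Set MeasureTheory intervalIntegral ContinuousLinearMap Filter Topology


noncomputable section WHGreen

/-- unit circle exponential -/
def ee (θ : ℝ) : ℂ := Complex.exp (θ • Complex.I)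

lemma ee_norm (θ : ℝ) : ‖ee θ‖ = 1 := by
  simp [ee, Complex.norm_exp, Complex.real_smul]

lemma ee_per : ee (2 * Real.pi) = ee 0 := by
  simp [ee, Complex.real_smul, Complex.exp_two_pi_mul_I]

variable (c₁ d : ℂ) (r₁ s : ℝ)

def Aa (p : ℝ × ℝ) : ℝ := r₁ + p.1 * s

def γ (p : ℝ × ℝ) : ℂ := c₁ + p.1 • d + (Aa r₁ s p) • ee p.2

def γt (p : ℝ × ℝ) : ℂ := d + s • ee p.2

def γθ (p : ℝ × ℝ) : ℂ := Aa r₁ s p • (ee p.2 * Complex.I)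

def DE (p : ℝ × ℝ) : ℝ × ℝ →L[ℝ] ℂ :=
  ee p.2 • ((ContinuousLinearMap.snd ℝ ℝ ℝ).smulRight Complex.I)

def DA : ℝ × ℝ →L[ℝ] ℝ := (ContinuousLinearMap.fst ℝ ℝ ℝ).smulRight s

def Dγ (p : ℝ × ℝ) : ℝ × ℝ →L[ℝ] ℂ :=
  (ContinuousLinearMap.fst ℝ ℝ ℝ).smulRight d +
    (Aa r₁ s p • DE p + (DA s).smulRight (ee p.2))

def Dγt (p : ℝ × ℝ) : ℝ × ℝ →L[ℝ] ℂ := s • DE p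

def Dγθ (p : ℝ × ℝ) : ℝ × ℝ →L[ℝ] ℂ :=
  Aa r₁ s p • (Complex.I • DE p) + (DA s).smulRight (ee p.2 * Complex.I)

lemma hasFDerivAt_ee (p : ℝ × ℝ) : HasFDerivAt (fun q : ℝ × ℝ => ee q.2) (DE p) p := by
  have h1 : HasFDerivAt (fun q : ℝ × ℝ => q.2 • Complex.I)
      ((ContinuousLinearMap.snd ℝ ℝ ℝ).smulRight Complex.I) p :=
    ((ContinuousLinearMap.snd ℝ ℝ ℝ).smulRight Complex.I).hasFDerivAt
  exact (Complex.hasDerivAt_exp (p.2 • Complex.I)).comp_hasFDerivAt p h1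

lemma hasFDerivAt_Aa (p : ℝ × ℝ) : HasFDerivAt (Aa r₁ s) (DA s) p := by
  have h1 : HasFDerivAt (fun q : ℝ × ℝ => q.1 • s)
      ((ContinuousLinearMap.fst ℝ ℝ ℝ).smulRight s) p :=
    ((ContinuousLinearMap.fst ℝ ℝ ℝ).smulRight s).hasFDerivAt
  exact (h1.const_add r₁ : _)

lemma hasFDerivAt_γ (p : ℝ × ℝ) : HasFDerivAt (γ c₁ d r₁ s) (Dγ d r₁ s p) p := by
  have h1 : HasFDerivAt (fun q : ℝ × ℝ => c₁ + q.1 • d)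
      ((ContinuousLinearMap.fst ℝ ℝ ℝ).smulRight d) p :=
    (((ContinuousLinearMap.fst ℝ ℝ ℝ).smulRight d).hasFDerivAt).const_add c₁
  exact h1.add ((hasFDerivAt_Aa r₁ s p).smul (hasFDerivAt_ee p))

lemma hasFDerivAt_γt (p : ℝ × ℝ) : HasFDerivAt (γt d s) (Dγt s p) p :=
  ((hasFDerivAt_ee p).const_smul s).const_add d

lemma hasFDerivAt_γθ (p : ℝ × ℝ) : HasFDerivAt (γθ r₁ s) (Dγθ r₁ s p) p :=
  (hasFDerivAt_Aa r₁ s p).smul ((hasFDerivAt_ee p).mul_const Complex.I)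

end WHGreen

noncomputable section


lemma circleIntegral_eq_sweep {c₁ c₂ : ℂ} {r₁ r₂ : ℝ} (h1 : 0 ≤ r₁)
    (hnd : ‖c₂ - c₁‖ + r₁ ≤ r₂) {U : Set ℂ} (hU : IsOpen U)
    (hsub : closedBall c₂ r₂ \ ball c₁ r₁ ⊆ U) {φ : ℂ → ℂ}
    (hφ : DifferentiableOn ℂ φ U) :
    (∮ w in C(c₂, r₂), φ w) = ∮ w in C(c₁, r₁), φ w := by
  set d : ℂ := c₂ - c₁ with hd
  set s : ℝ := r₂ - r₁ with hs
  have hds : ‖d‖ ≤ s := by rw [hd, hs]; linarith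
  have hs0 : 0 ≤ s := le_trans (norm_nonneg d) hds
  have hmem : ∀ p : ℝ × ℝ, 0 ≤ p.1 → p.1 ≤ 1 → γ c₁ d r₁ s p ∈ U := by
    intro p h0 h1'
    apply hsub
    have hA0 : 0 ≤ Aa r₁ s p := by unfold Aa; nlinarith
    have hnd0 : 0 ≤ ‖d‖ := norm_nonneg d
    constructor
    · rw [mem_closedBall, dist_eq_norm]
      have he : γ c₁ d r₁ s p - c₂ = (p.1 - 1) • d + Aa r₁ s p • ee p.2 := by
        simp only [γ, hd, Aa, Complex.real_smul]
        push_cast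
        ring
      rw [he]
      calc ‖(p.1 - 1) • d + Aa r₁ s p • ee p.2‖
          ≤ ‖(p.1 - 1) • d‖ + ‖Aa r₁ s p • ee p.2‖ := norm_add_le _ _
        _ = |p.1 - 1| * ‖d‖ + |Aa r₁ s p| * ‖ee p.2‖ := by
            rw [norm_smul, norm_smul, Real.norm_eq_abs, Real.norm_eq_abs]
        _ ≤ r₂ := by
            rw [abs_of_nonpos (by linarith), _root_.abs_of_nonneg hA0]
            have : ‖ee p.2‖ = 1 := by rw [ee_norm]
            rw [this]
            simp only [Aa]
            nlinarith
    · rw [mem_ball, dist_eq_norm, not_lt]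
      have he : γ c₁ d r₁ s p - c₁ = p.1 • d + Aa r₁ s p • ee p.2 := by
        simp only [γ, Aa, Complex.real_smul]; push_cast; ring
      rw [he]
      have h3 : ‖Aa r₁ s p • ee p.2‖ ≤ ‖p.1 • d + Aa r₁ s p • ee p.2‖ + ‖p.1 • d‖ := by
        have := norm_sub_le (p.1 • d + Aa r₁ s p • ee p.2) (p.1 • d)
        simpa using this
      have h4 : ‖Aa r₁ s p • ee p.2‖ = Aa r₁ s p := by
        rw [norm_smul, Real.norm_eq_abs, _root_.abs_of_nonneg hA0, ee_norm,
          mul_one]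
      have h5 : ‖p.1 • d‖ = p.1 * ‖d‖ := by
        rw [norm_smul, Real.norm_eq_abs, _root_.abs_of_nonneg h0]
      rw [h4, h5] at h3
      simp only [Aa] at h3 ⊢
      nlinarith
  set F : ℝ × ℝ → ℂ := fun p => φ (γ c₁ d r₁ s p) * γθ r₁ s p with hF
  set G : ℝ × ℝ → ℂ := fun p => φ (γ c₁ d r₁ s p) * γt d s p with hG
  set DF : ℝ × ℝ → ℝ × ℝ →L[ℝ] ℂ := fun p =>
    φ (γ c₁ d r₁ s p) • Dγθ r₁ s p +
      γθ r₁ s p • (deriv φ (γ c₁ d r₁ s p) • Dγ d r₁ s p) with hDF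
  set DG : ℝ × ℝ → ℝ × ℝ →L[ℝ] ℂ := fun p =>
    φ (γ c₁ d r₁ s p) • Dγt s p +
      γt d s p • (deriv φ (γ c₁ d r₁ s p) • Dγ d r₁ s p) with hDG
  have hγcont : Continuous (γ c₁ d r₁ s) := by unfold γ Aa ee; fun_prop
  have hγθcont : Continuous (γθ r₁ s) := by unfold γθ Aa ee; fun_prop
  have hγtcont : Continuous (γt d s) := by unfold γt ee; fun_prop
  have hder : ∀ p : ℝ × ℝ, 0 ≤ p.1 → p.1 ≤ 1 →
      HasFDerivAt F (DF p) p ∧ HasFDerivAt G (DG p) p := by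
    intro p h0 h1'
    have hφd : HasDerivAt φ (deriv φ (γ c₁ d r₁ s p)) (γ c₁ d r₁ s p) :=
      (hφ.differentiableAt (hU.mem_nhds (hmem p h0 h1'))).hasDerivAt
    have hφγ := hφd.comp_hasFDerivAt p (hasFDerivAt_γ c₁ d r₁ s p)
    exact ⟨hφγ.mul (hasFDerivAt_γθ r₁ s p), hφγ.mul (hasFDerivAt_γt d s p)⟩
  have hzero : ∀ p : ℝ × ℝ, DF p (1, 0) + (-(DG p)) (0, 1) = 0 := by
    intro p
    simp only [hDF, hDG, Dγθ, Dγt, Dγ, DE, DA, γθ, γt, ContinuousLinearMap.add_apply,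
      ContinuousLinearMap.neg_apply, ContinuousLinearMap.smul_apply,
      ContinuousLinearMap.smulRight_apply, ContinuousLinearMap.coe_fst',
      ContinuousLinearMap.coe_snd', smul_eq_mul, Complex.real_smul]
    push_cast
    ring
  have hle : ((0:ℝ),(0:ℝ)) ≤ ((1:ℝ), 2*Real.pi) := ⟨zero_le_one, by positivity⟩
  have hmemIcc : ∀ p ∈ Icc ((0:ℝ),(0:ℝ)) ((1:ℝ), 2*Real.pi), γ c₁ d r₁ s p ∈ U := by
    intro p hp
    exact hmem p (mem_Icc.mp hp).1.1 (mem_Icc.mp hp).2.1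
  have Hcφγ : ContinuousOn (fun p => φ (γ c₁ d r₁ s p))
      (Icc ((0:ℝ),(0:ℝ)) ((1:ℝ), 2*Real.pi)) :=
    hφ.continuousOn.comp hγcont.continuousOn hmemIcc
  have Hcf : ContinuousOn F (Icc ((0:ℝ),(0:ℝ)) ((1:ℝ), 2*Real.pi)) :=
    Hcφγ.mul hγθcont.continuousOn
  have Hcg : ContinuousOn (fun p => -(G p)) (Icc ((0:ℝ),(0:ℝ)) ((1:ℝ), 2*Real.pi)) :=
    (Hcφγ.mul hγtcont.continuousOn).neg
  have key := MeasureTheory.integral_divergence_prod_Icc_of_hasFDerivAt_off_countable_of_le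
      F (fun p => -(G p)) DF (fun p => -(DG p)) ((0:ℝ),(0:ℝ)) ((1:ℝ), 2*Real.pi) hle ∅
      countable_empty Hcf Hcg
      (fun x hx => (hder x hx.1.1.1.le hx.1.1.2.le).1)
      (fun x hx => ((hder x hx.1.1.1.le hx.1.1.2.le).2).neg)
      (by
        have : (fun x : ℝ × ℝ => DF x (1, 0) + (-(DG x)) (0, 1)) = fun _ => (0:ℂ) :=
          funext hzero
        rw [this]
        exact MeasureTheory.integrableOn_zero)
  rw [show (fun x : ℝ × ℝ => DF x (1, 0) + (-(DG x)) (0, 1)) = fun _ => (0:ℂ) from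
    funext hzero] at key
  rw [MeasureTheory.integral_zero] at key
  have hper : ∀ x : ℝ, G (x, 2*Real.pi) = G (x, 0) := by
    intro x; simp only [hG, γ, γt, Aa, ee_per]
  have h2 : (∫ y in (0:ℝ)..(2*Real.pi), F (1, y)) = ∮ w in C(c₂, r₂), φ w := by
    rw [circleIntegral]
    refine intervalIntegral.integral_congr fun θ hθ => ?_
    have hγ1 : γ c₁ d r₁ s (1, θ) = circleMap c₂ r₂ θ := by
      simp only [γ, Aa, ee, circleMap, hd, hs, Complex.real_smul]; push_cast; ring
    have hγθ1 : γθ r₁ s (1, θ) = circleMap 0 r₂ θ * Complex.I := by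
      simp only [γθ, Aa, ee, circleMap, hd, hs, Complex.real_smul]; push_cast; ring
    simp only [hF, deriv_circleMap, hγ1, hγθ1, smul_eq_mul]
    ring
  have h3 : (∫ y in (0:ℝ)..(2*Real.pi), F (0, y)) = ∮ w in C(c₁, r₁), φ w := by
    rw [circleIntegral]
    refine intervalIntegral.integral_congr fun θ hθ => ?_
    have hγ1 : γ c₁ d r₁ s (0, θ) = circleMap c₁ r₁ θ := by
      simp only [γ, Aa, ee, circleMap, hd, hs, Complex.real_smul]; push_cast; ring
    have hγθ1 : γθ r₁ s (0, θ) = circleMap 0 r₁ θ * Complex.I := by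
      simp only [γθ, Aa, ee, circleMap, hd, hs, Complex.real_smul]; push_cast; ring
    simp only [hF, deriv_circleMap, hγ1, hγθ1, smul_eq_mul]
    ring
  simp only [hper, sub_self, zero_add] at key
  rw [h2, h3] at key
  linear_combination -key


lemma deriv_ne_zero_of_injOn {U : Set ℂ} (hU : IsOpen U) {b : ℂ → ℂ}
    (hb : DifferentiableOn ℂ b U) (hinj : Set.InjOn b U) {z : ℂ} (hz : z ∈ U) :
    deriv b z ≠ 0 := by
  intro hzero
  have hba : AnalyticAt ℂ b z := (hb.analyticOnNhd hU) z hz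
  have hfa : AnalyticAt ℂ (fun w => b w - b z) z := hba.sub analyticAt_const
  have hne : ¬ (∀ᶠ w in 𝓝 z, b w - b z = 0) := by
    intro h
    have h2 : ∀ᶠ w in 𝓝[≠] z, (b w - b z = 0 ∧ w ∈ U) ∧ w ≠ z :=
      ((h.filter_mono nhdsWithin_le_nhds).and
        ((hU.eventually_mem hz).filter_mono nhdsWithin_le_nhds)).and
        eventually_mem_nhdsWithin
    obtain ⟨w, ⟨hw0, hwU⟩, hwz⟩ := h2.exists
    exact hwz (hinj hwU hz (sub_eq_zero.mp hw0))
  have hord : analyticOrderAt (fun w => b w - b z) z ≠ ⊤ := fun h => hne (analyticOrderAt_eq_top.mp h)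
  obtain ⟨n, hn⟩ : ∃ n : ℕ, analyticOrderAt (fun w => b w - b z) z = n := by
    lift analyticOrderAt (fun w => b w - b z) z to ℕ using hord with n
    exact ⟨n, rfl⟩
  obtain ⟨gg, hgg, hgg0, hfeq⟩ := (hfa.analyticOrderAt_eq_natCast).mp hn
  -- n ≠ 0
  have hn0 : n ≠ 0 := by
    intro h
    apply hgg0
    have := hfeq.self_of_nhds
    simpa [h] using this.symm
  -- n ≠ 1
  have hn1 : n ≠ 1 := by
    intro h
    subst h
    have h1 : HasDerivAt (fun w => (w - z) ^ 1 • gg w)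
        ((1:ℂ) * gg z + (z - z) * deriv gg z) z := by
      simp only [pow_one, smul_eq_mul]
      exact ((hasDerivAt_id z).sub_const z).mul hgg.differentiableAt.hasDerivAt
    have h2 : HasDerivAt (fun w => b w - b z) (gg z) z := by
      have := h1.congr_of_eventuallyEq (hfeq.mono fun w hw => by
        simpa using hw)
      simpa using this
    have h3 : deriv (fun w => b w - b z) z = gg z := h2.deriv
    rw [deriv_sub_const, hzero] at h3
    exact hgg0 h3.symm
  have hn2 : 2 ≤ n := by omega
  have hnC : (n : ℂ) ≠ 0 := Nat.cast_ne_zero.mpr hn0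
  -- n-th root of gg
  set ζ₀ : ℂ := Complex.exp (Complex.log (gg z) / n) with hζ₀def
  have hζ₀ : ζ₀ ≠ 0 := Complex.exp_ne_zero _
  have hζ₀n : ζ₀ ^ n = gg z := by
    rw [hζ₀def, ← Complex.exp_nat_mul, mul_div_cancel₀ _ hnC, Complex.exp_log hgg0]
  set ψ : ℂ → ℂ := fun w => ζ₀ * Complex.exp (Complex.log (gg w / gg z) / n) with hψdef
  have hq1 : gg z / gg z = 1 := div_self hgg0
  have hψa : AnalyticAt ℂ ψ z := by
    apply analyticAt_const.mul
    apply (Complex.differentiable_exp.analyticAt _).comp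
    apply AnalyticAt.div _ analyticAt_const hnC
    exact (analyticAt_clog (by rw [hq1]; exact Complex.one_mem_slitPlane)).comp
      (hgg.div analyticAt_const hgg0)
  have hψz : ψ z = ζ₀ := by
    simp [hψdef, hq1]
  have hψn : ∀ᶠ w in 𝓝 z, ψ w ^ n = gg w := by
    filter_upwards [hgg.continuousAt.eventually_ne hgg0] with w hw
    have hq0 : gg w / gg z ≠ 0 := div_ne_zero hw hgg0
    have hstep : Complex.exp (Complex.log (gg w / gg z) / n) ^ n = gg w / gg z := by
      rw [← Complex.exp_nat_mul, mul_div_cancel₀ _ hnC, Complex.exp_log hq0]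
    rw [hψdef]
    show (ζ₀ * Complex.exp (Complex.log (gg w / gg z) / n)) ^ n = gg w
    rw [mul_pow, hstep, hζ₀n]
    field_simp
  set h : ℂ → ℂ := fun w => (w - z) * ψ w with hhdef
  have hh0 : h z = 0 := by simp [hhdef]
  have hha : AnalyticAt ℂ h z := ((analyticAt_id).sub analyticAt_const).mul hψa
  have hder : HasDerivAt h ζ₀ z := by
    have h1 : HasDerivAt h ((1:ℂ) * ψ z + (z - z) * deriv ψ z) z :=
      ((hasDerivAt_id z).sub_const z).mul hψa.differentiableAt.hasDerivAt
    simpa [hψz] using h1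
  have hstrict : HasStrictDerivAt h ζ₀ z := by
    have h1 := hha.hasStrictFDerivAt.hasStrictDerivAt
    rwa [show fderiv ℂ h z 1 = ζ₀ from by
      simp [hder.hasFDerivAt.fderiv]] at h1
  have hmap : Filter.map h (𝓝 z) = 𝓝 0 := by
    have := hstrict.map_nhds_eq hζ₀
    rwa [hh0] at this
  have hV : ∀ᶠ w in 𝓝 z, (b w - b z = (w - z) ^ n • gg w ∧ ψ w ^ n = gg w) ∧ w ∈ U :=
    (hfeq.and hψn).and (hU.eventually_mem hz)
  have himg : h '' {w | (b w - b z = (w - z) ^ n • gg w ∧ ψ w ^ n = gg w) ∧ w ∈ U} ∈ 𝓝 (0:ℂ) := by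
    rw [← hmap]
    exact Filter.image_mem_map hV
  obtain ⟨ε, hε, hball⟩ := Metric.mem_nhds_iff.mp himg
  set ζ : ℂ := ((ε / 2 : ℝ) : ℂ) with hζdef
  have hζ0 : ζ ≠ 0 := by
    simp only [hζdef, ne_eq, Complex.ofReal_eq_zero]
    positivity
  have hζball : ζ ∈ ball (0:ℂ) ε := by
    simp only [hζdef, mem_ball, dist_zero_right, Complex.norm_real, Real.norm_eq_abs]
    rw [abs_of_pos (by positivity)]
    linarith
  set ω : ℂ := Complex.exp (2 * Real.pi * Complex.I / n) with hωdef
  have hω1 : ω ≠ 1 := by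
    intro h1
    obtain ⟨k, hk⟩ := Complex.exp_eq_one_iff.mp h1
    rw [div_eq_iff hnC] at hk
    have hπ : (2 * (Real.pi:ℂ) * Complex.I) ≠ 0 := by
      simp [Real.pi_ne_zero, Complex.I_ne_zero]
    have h2 : (1 : ℂ) = k * n := by
      have h3 : (1 : ℂ) * (2 * (Real.pi:ℂ) * Complex.I)
          = (k * n) * (2 * (Real.pi:ℂ) * Complex.I) := by
        push_cast at hk ⊢
        linear_combination hk
      exact mul_right_cancel₀ hπ h3
    have h4 : (1 : ℤ) = k * n := by
      exact_mod_cast h2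
    have h5 : (n:ℤ) ∣ 1 := ⟨k, by linarith [h4]⟩
    have h6 : (n:ℤ) ≤ 1 := Int.le_of_dvd one_pos h5
    omega
  have hωn : ω ^ n = 1 := by
    rw [hωdef, ← Complex.exp_nat_mul, mul_div_cancel₀ _ hnC]
    simpa using Complex.exp_two_pi_mul_I
  have hωabs : ‖ω‖ = 1 := by
    rw [hωdef, Complex.norm_exp]
    have : (2 * Real.pi * Complex.I / n).re = 0 := by
      rw [show (2 * Real.pi * Complex.I / n : ℂ) = ((2 * Real.pi / n : ℝ) : ℂ) * Complex.I by
        push_cast; ring]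
      simp
    rw [this, Real.exp_zero]
  have hωζball : ω * ζ ∈ ball (0:ℂ) ε := by
    simp only [mem_ball, dist_zero_right] at hζball ⊢
    rwa [norm_mul, show ‖ω‖ = 1 from hωabs, one_mul]
  obtain ⟨w₁, hw₁P, hw₁⟩ := hball hζball
  obtain ⟨w₂, hw₂P, hw₂⟩ := hball hωζball
  have hfval : ∀ w, (b w - b z = (w - z) ^ n • gg w ∧ ψ w ^ n = gg w) ∧ w ∈ U →
      b w - b z = h w ^ n := by
    rintro w ⟨⟨he1, he2⟩, _⟩
    rw [hhdef, he1, ← he2, smul_eq_mul, ← mul_pow]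
  have hbw : b w₁ = b w₂ := by
    have h1 : b w₁ - b z = ζ ^ n := by rw [hfval w₁ hw₁P, hw₁]
    have h2 : b w₂ - b z = ζ ^ n := by
      rw [hfval w₂ hw₂P, hw₂, mul_pow, hωn, one_mul]
    linear_combination h1 - h2
  have hne12 : w₁ ≠ w₂ := by
    intro h12
    rw [h12, hw₂] at hw₁
    exact hω1 (by field_simp at hw₁; tauto)
  exact hne12 (hinj hw₁P.2 hw₂P.2 hbw)

/-- the Wiener–Hopf-type decomposition.  For two positively
oriented circles (the contours `ω₋ = C(c₁,r₁)` and `ω₊ = C(c₂,r₂)`) inside an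
open set `Λ`, both enclosing a compact set `K`, with `ω₋` strictly inside
`ω₊`, `b` holomorphic and injective on `Λ`, and `g` holomorphic on `Λ ∖ K`,
for every `z` in the open annulus between the two contours:
`g(z) = (1/2πi) ∮_{ω₊} g(w) b'(w)/(b(w) − b(z)) dw
      − (1/2πi) ∮_{ω₋} g(w) b'(w)/(b(w) − b(z)) dw`. -/

theorem wiener_hopf_decomposition (Λ : Set ℂ) (hΛ : IsOpen Λ) (K : Set ℂ)
    (hK : IsCompact K) (c₁ c₂ : ℂ) (r₁ r₂ : ℝ) (hr₁ : 0 < r₁) (hr₂ : 0 < r₂)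
    (hsub : Metric.closedBall c₁ r₁ ⊆ Metric.ball c₂ r₂)
    (hK₁ : K ⊆ Metric.ball c₁ r₁)
    (hΛ₂ : Metric.closedBall c₂ r₂ ⊆ Λ)
    (b : ℂ → ℂ) (hb : DifferentiableOn ℂ b Λ) (hbinj : Set.InjOn b Λ)
    (g : ℂ → ℂ) (hg : DifferentiableOn ℂ g (Λ \ K)) :
    ∀ z ∈ Metric.ball c₂ r₂ \ Metric.closedBall c₁ r₁,
      g z = (1 / (2 * (Real.pi : ℂ) * Complex.I)) *
              (∮ w in C(c₂, r₂), g w * deriv b w / (b w - b z))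
          - (1 / (2 * (Real.pi : ℂ) * Complex.I)) *
              (∮ w in C(c₁, r₁), g w * deriv b w / (b w - b z)) := by
  intro z hz
  have hz₂ := hz.1
  have hz₁ := hz.2
  have hzΛ : z ∈ Λ := hΛ₂ (Metric.ball_subset_closedBall hz₂)
  have hzK : z ∉ K := fun h => hz₁ (Metric.ball_subset_closedBall (hK₁ h))
  have hΛK : IsOpen (Λ \ K) := hΛ.sdiff hK.isClosed
  have hzΛK : z ∈ Λ \ K := ⟨hzΛ, hzK⟩
  have hbz : deriv b z ≠ 0 := deriv_ne_zero_of_injOn hΛ hb hbinj hzΛ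
  -- distance inequality
  have hdist : ‖c₂ - c₁‖ + r₁ ≤ r₂ := by
    rcases eq_or_ne c₁ c₂ with h | h
    · subst h
      have hm : c₁ + (r₁:ℂ) ∈ closedBall c₁ r₁ := by
        simp [mem_closedBall, dist_eq_norm, abs_of_pos hr₁]
      have := hsub hm
      rw [mem_ball, dist_eq_norm] at this
      simp only [add_sub_cancel_left] at this
      simp only [sub_self, norm_zero, zero_add]
      have h1 : ‖(r₁:ℂ)‖ = r₁ := by
        rw [Complex.norm_real, Real.norm_eq_abs, abs_of_pos hr₁]
      rw [h1] at this
      linarith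
    · set v : ℂ := c₁ - c₂ with hv
      have hv0 : v ≠ 0 := sub_ne_zero.mpr h
      have hnv : ‖v‖ ≠ 0 := norm_ne_zero_iff.mpr hv0
      set u : ℂ := v / ‖v‖ with hu
      have hu1 : ‖u‖ = 1 := by
        rw [hu, norm_div, Complex.norm_real, Real.norm_eq_abs, abs_norm]
        exact div_self hnv
      have hm : c₁ + (r₁:ℂ) * u ∈ closedBall c₁ r₁ := by
        rw [mem_closedBall, dist_eq_norm]
        simp only [add_sub_cancel_left]
        rw [norm_mul, hu1, mul_one, Complex.norm_real, Real.norm_eq_abs, abs_of_pos hr₁]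
      have hlt := hsub hm
      rw [mem_ball, dist_eq_norm] at hlt
      have hform : c₁ + (r₁:ℂ) * u - c₂ = ((‖v‖ : ℝ) + r₁ : ℝ) * u := by
        have hC : ((‖v‖ : ℝ) : ℂ) ≠ 0 := Complex.ofReal_ne_zero.mpr hnv
        have hvu : (‖v‖ : ℂ) * u = v := by
          rw [hu, mul_comm, div_mul_cancel₀ _ hC]
        push_cast
        rw [add_mul, hvu, hv]
        ring
      rw [hform] at hlt
      rw [norm_mul, hu1, mul_one, Complex.norm_real, Real.norm_eq_abs,
        abs_of_pos (by positivity)] at hlt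
      have : ‖c₂ - c₁‖ = ‖v‖ := by rw [hv, norm_sub_rev]
      linarith
  -- dslope factorization
  set db : ℂ → ℂ := dslope b z with hdbdef
  have hdbΛ : DifferentiableOn ℂ db Λ :=
    (Complex.differentiableOn_dslope (hΛ.mem_nhds hzΛ)).mpr hb
  have hfac : ∀ w, b w - b z = (w - z) * db w := fun w => by
    have := sub_smul_dslope b z w
    rw [smul_eq_mul] at this
    rw [hdbdef, ← this]
  have hdbne : ∀ w ∈ Λ, db w ≠ 0 := by
    intro w hw
    rcases eq_or_ne w z with rfl | hne
    · rw [hdbdef, dslope_same]; exact hbz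
    · intro h0
      have h1 := hfac w
      rw [h0, mul_zero] at h1
      exact hne (hbinj hw hzΛ (sub_eq_zero.mp h1))
  have hbeqfun : b = fun w => b z + (w - z) * db w := funext fun w => by
    rw [← hfac w]; ring
  have hderivb : ∀ w ∈ Λ, deriv b w = db w + (w - z) * deriv db w := by
    intro w hw
    have hdb : HasDerivAt db (deriv db w) w :=
      (hdbΛ.differentiableAt (hΛ.mem_nhds hw)).hasDerivAt
    have h1 : HasDerivAt (fun u => b z + (u - z) * db u)
        ((1:ℂ) * db w + (w - z) * deriv db w) w :=
      (((hasDerivAt_id w).sub_const z).mul hdb).const_add (b z)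
    have h2 : HasDerivAt b ((1:ℂ) * db w + (w - z) * deriv db w) w := by
      rw [hbeqfun]; exact h1
    rw [h2.deriv]; ring
  have hdb' : DifferentiableOn ℂ (deriv db) Λ :=
    ((hdbΛ.analyticOnNhd hΛ).deriv).differentiableOn
  set Ψ : ℂ → ℂ := fun w => deriv db w / db w with hΨdef
  have hΨ : DifferentiableOn ℂ Ψ Λ := hdb'.div hdbΛ hdbne
  set φ₁ : ℂ → ℂ := fun w => dslope g z w + g w * Ψ w with hφ₁def
  have hφ₁ : DifferentiableOn ℂ φ₁ (Λ \ K) :=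
    ((Complex.differentiableOn_dslope (hΛK.mem_nhds hzΛK)).mpr hg).add
      (hg.mul (hΨ.mono diff_subset))
  have hann : closedBall c₂ r₂ \ ball c₁ r₁ ⊆ Λ \ K := fun w hw =>
    ⟨hΛ₂ hw.1, fun hk => hw.2 (hK₁ hk)⟩
  have hgreen := circleIntegral_eq_sweep hr₁.le hdist hΛK hann hφ₁
  -- pointwise identity
  have hpt : ∀ w ∈ Λ, w ≠ z →
      g w * deriv b w / (b w - b z) - g z * (w - z)⁻¹ = φ₁ w := by
    intro w hw hne
    have hwz : w - z ≠ 0 := sub_ne_zero.mpr hne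
    have hdw : db w ≠ 0 := hdbne w hw
    rw [hderivb w hw, hfac w, hφ₁def]
    simp only [hΨdef]
    rw [dslope_of_ne g hne, slope_def_field]
    field_simp
    ring
  -- sphere facts
  have hsph₂ : sphere c₂ r₂ ⊆ closedBall c₂ r₂ \ ball c₁ r₁ := by
    intro w hw
    refine ⟨sphere_subset_closedBall hw, fun hb' => ?_⟩
    have := hsub (ball_subset_closedBall hb')
    rw [mem_ball] at this
    rw [mem_sphere] at hw
    linarith
  have hsph₁ : sphere c₁ r₁ ⊆ closedBall c₂ r₂ \ ball c₁ r₁ := by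
    intro w hw
    refine ⟨ball_subset_closedBall (hsub (sphere_subset_closedBall hw)), fun hb' => ?_⟩
    rw [mem_ball] at hb'
    rw [mem_sphere] at hw
    linarith
  have hzs₂ : ∀ w ∈ sphere c₂ r₂, w ≠ z := by
    intro w hw he
    subst he
    rw [mem_sphere] at hw
    rw [mem_ball] at hz₂
    linarith
  have hzs₁ : ∀ w ∈ sphere c₁ r₁, w ≠ z := by
    intro w hw he
    subst he
    exact hz₁ (sphere_subset_closedBall hw)
  -- integrability
  have hderivbCont : ContinuousOn (deriv b) Λ :=
    ((hb.analyticOnNhd hΛ).deriv).differentiableOn.continuousOn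
  have hFbCont : ∀ (c : ℂ) (r : ℝ), sphere c r ⊆ closedBall c₂ r₂ \ ball c₁ r₁ →
      (∀ w ∈ sphere c r, w ≠ z) →
      ContinuousOn (fun w => g w * deriv b w / (b w - b z)) (sphere c r) := by
    intro c r hs hzz
    have hsΛK : sphere c r ⊆ Λ \ K := fun w hw => hann (hs hw)
    have hsΛ : sphere c r ⊆ Λ := fun w hw => (hsΛK hw).1
    apply ContinuousOn.div
    · exact (hg.continuousOn.mono hsΛK).mul (hderivbCont.mono hsΛ)
    · exact ((hb.continuousOn.mono hsΛ).sub continuousOn_const)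
    · intro w hw
      refine sub_ne_zero.mpr fun he => hzz w hw (hbinj (hsΛ hw) hzΛ he)
  have hInvCont : ∀ (c : ℂ) (r : ℝ), (∀ w ∈ sphere c r, w ≠ z) →
      ContinuousOn (fun w => g z * (w - z)⁻¹) (sphere c r) := by
    intro c r hzz
    apply continuousOn_const.mul
    exact ((continuousOn_id.sub continuousOn_const).inv₀
      (fun w hw => sub_ne_zero.mpr (hzz w hw)))
  -- per-circle identity
  have hcirc : ∀ (c : ℂ) (r : ℝ), 0 ≤ r → sphere c r ⊆ closedBall c₂ r₂ \ ball c₁ r₁ →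
      (∀ w ∈ sphere c r, w ≠ z) →
      (∮ w in C(c, r), g w * deriv b w / (b w - b z))
        - (∮ w in C(c, r), g z * (w - z)⁻¹) = ∮ w in C(c, r), φ₁ w := by
    intro c r hr hs hzz
    rw [← circleIntegral.integral_sub
      ((hFbCont c r hs hzz).circleIntegrable hr)
      ((hInvCont c r hzz).circleIntegrable hr)]
    refine circleIntegral.integral_congr hr fun w hw => ?_
    exact hpt w (hann (hs hw)).1 (hzz w hw)
  have hbig := hcirc c₂ r₂ hr₂.le hsph₂ hzs₂
  have hsmall := hcirc c₁ r₁ hr₁.le hsph₁ hzs₁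
  -- the inverse integrals
  have hinv₂ : (∮ w in C(c₂, r₂), g z * (w - z)⁻¹) = g z * (2 * Real.pi * Complex.I) := by
    rw [circleIntegral.integral_const_mul, circleIntegral.integral_sub_inv_of_mem_ball hz₂]
  have hinv₁ : (∮ w in C(c₁, r₁), g z * (w - z)⁻¹) = 0 := by
    rw [circleIntegral.integral_const_mul]
    rw [Complex.circleIntegral_eq_zero_of_differentiable_on_off_countable hr₁.le
      countable_empty ?_ ?_, mul_zero]
    · intro w hw
      have hwz : w ≠ z := fun he => hz₁ (he ▸ hw)
      exact ContinuousWithinAt.inv₀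
        ((continuousWithinAt_id.sub continuousWithinAt_const))
        (sub_ne_zero.mpr hwz) |>.congr (fun y hy => rfl) rfl
    · intro w hw
      have hwz : w ≠ z := fun he => hz₁ (he ▸ ball_subset_closedBall hw.1)
      exact ((differentiableAt_id.sub_const z).inv (sub_ne_zero.mpr hwz))
  rw [hinv₂] at hbig
  rw [hinv₁, sub_zero] at hsmall
  have h2πi : (2 * (Real.pi:ℂ) * Complex.I) ≠ 0 := by
    simp [Real.pi_ne_zero, Complex.I_ne_zero]
  have hXY : (∮ w in C(c₂, r₂), g w * deriv b w / (b w - b z))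
      - (∮ w in C(c₁, r₁), g w * deriv b w / (b w - b z))
      = (2 * (Real.pi:ℂ) * Complex.I) * g z := by
    linear_combination hbig - hsmall + hgreen
  have hfin : (1 / (2 * (Real.pi:ℂ) * Complex.I)) *
        (∮ w in C(c₂, r₂), g w * deriv b w / (b w - b z))
      - (1 / (2 * (Real.pi:ℂ) * Complex.I)) *
        (∮ w in C(c₁, r₁), g w * deriv b w / (b w - b z))
      = (1 / (2 * (Real.pi:ℂ) * Complex.I)) *
        ((∮ w in C(c₂, r₂), g w * deriv b w / (b w - b z))
          - ∮ w in C(c₁, r₁), g w * deriv b w / (b w - b z)) := by ring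
  rw [hfin, hXY]
  field_simp
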